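/- For the stochastic tandem queueing system with infinite buffers, suppose the sequences {τ_{i,n} : n = 1, 2, …}, i = 0, 1, …, M, are mutually independent sequences of independent and identically distributed nonnegative random variables with 0 ≤ E[τ_{i,1}] < ∞. Then there is a constant γ such that D_M(n)/n converges to γ with probability one as n → ∞, and E[D_M(n)]/n also converges to γ. -/

import Mathlib

open MeasureTheory ProbabilityTheory Finset Filter

/-- Departure epochs of the tandem queueing system with infinite buffers. -/
noncomputable def depart (τ : ℕ → ℕ → ℝ) : ℕ → ℕ → ℝ
  | 0, 0 => 0
  | 0, n + 1 => depart τ 0 n + τ 0 (n + 1)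
  | _ + 1, 0 => 0
  | m + 1, n + 1 =>
      max (depart τ m (n + 1)) (depart τ (m + 1) n) + τ (m + 1) (n + 1)
  termination_by m n => (m, n)

open Topology
open scoped ENNReal NNReal


lemma depart_zero (t : ℕ → ℕ → ℝ) (m : ℕ) : depart t m 0 = 0 := by
  cases m <;> simp [depart]

lemma depart_succ (t : ℕ → ℕ → ℝ) (m n : ℕ) :
    depart t (m + 1) (n + 1)
      = max (depart t m (n + 1)) (depart t (m + 1) n) + t (m + 1) (n + 1) := by
  simp [depart]

lemma depart_zero_left (t : ℕ → ℕ → ℝ) (n : ℕ) :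
    depart t 0 n = ∑ j ∈ range n, t 0 (j + 1) := by
  induction n with
  | zero => simp [depart]
  | succ n ih => rw [Finset.sum_range_succ, ← ih]; simp [depart]

lemma depart_congr (t t' : ℕ → ℕ → ℝ) :
    ∀ m n, (∀ i ≤ m, ∀ j, 1 ≤ j → j ≤ n → t i j = t' i j) →
      depart t m n = depart t' m n := by
  intro m
  induction m with
  | zero =>
    intro n h
    rw [depart_zero_left, depart_zero_left]
    exact Finset.sum_congr rfl fun j hj => h 0 le_rfl (j+1) (by omega)
      (by simp at hj; omega)
  | succ m ihm =>
    intro n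
    induction n with
    | zero => simp [depart]
    | succ n ihn =>
      intro h
      rw [depart_succ, depart_succ,
        ihm (n+1) (fun i hi j h1 h2 => h i (by omega) j h1 h2),
        ihn (fun i hi j h1 h2 => h i hi j h1 (by omega)), h (m+1) le_rfl (n+1) (by omega) le_rfl]

lemma depart_nonneg (t : ℕ → ℕ → ℝ) (ht : ∀ i n, 0 ≤ t i n) :
    ∀ m n, 0 ≤ depart t m n := by
  intro m
  induction m with
  | zero =>
    intro n
    rw [depart_zero_left]
    exact Finset.sum_nonneg fun j _ => ht _ _
  | succ m ihm =>
    intro n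
    induction n with
    | zero => simp [depart]
    | succ n ihn =>
      rw [depart_succ]
      have := ht (m+1) (n+1)
      have h2 := le_max_right (depart t m (n+1)) (depart t (m+1) n)
      linarith

lemma depart_succ_right_ge (t : ℕ → ℕ → ℝ) (m n : ℕ) :
    depart t m n + t m (n + 1) ≤ depart t m (n + 1) := by
  cases m with
  | zero => simp [depart]
  | succ m =>
    rw [depart_succ]
    have := le_max_right (depart t m (n+1)) (depart t (m+1) n)
    linarith

lemma depart_mono_left (t : ℕ → ℕ → ℝ) (ht : ∀ i n, 0 ≤ t i n) (m n : ℕ) :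
    depart t m n ≤ depart t (m + 1) n := by
  cases n with
  | zero => simp [depart_zero]
  | succ n =>
    rw [depart_succ]
    have := ht (m+1) (n+1)
    have := le_max_left (depart t m (n+1)) (depart t (m+1) n)
    linarith

lemma le_depart_of_le (t : ℕ → ℕ → ℝ) (ht : ∀ i n, 0 ≤ t i n) {i m : ℕ} (him : i ≤ m)
    (n : ℕ) : depart t i n ≤ depart t m n := by
  induction m with
  | zero =>
    have : i = 0 := by omega
    simp [this]
  | succ m ihm =>
    rcases Nat.lt_or_ge i (m+1) with h | h
    · exact (ihm (by omega)).trans (depart_mono_left t ht m n)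
    · have : i = m + 1 := by omega
      simp [this]

lemma sum_le_depart (t : ℕ → ℕ → ℝ) (ht : ∀ i n, 0 ≤ t i n) {i m : ℕ} (him : i ≤ m)
    (n : ℕ) : ∑ j ∈ range n, t i (j + 1) ≤ depart t m n := by
  have h1 : ∑ j ∈ range n, t i (j + 1) ≤ depart t i n := by
    induction n with
    | zero => simp [depart_zero]
    | succ n ihn =>
      rw [Finset.sum_range_succ]
      have := depart_succ_right_ge t i n
      linarith
  exact h1.trans (le_depart_of_le t ht him n)

lemma depart_le_sum (t : ℕ → ℕ → ℝ) (ht : ∀ i n, 0 ≤ t i n) :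
    ∀ m n, depart t m n ≤ ∑ i ∈ range (m + 1), ∑ j ∈ range n, t i (j + 1) := by
  intro m
  induction m with
  | zero => intro n; rw [depart_zero_left]; simp
  | succ m ihm =>
    intro n
    induction n with
    | zero => simp only [depart_zero]; positivity
    | succ n ihn =>
      rw [depart_succ, ← max_add_add_right]
      apply max_le
      · have hA := ihm (n+1)
        have hsingle : t (m+1) (n+1) ≤ ∑ j ∈ range (n+1), t (m+1) (j+1) := by
          calc t (m+1) (n+1) = t (m+1) (n+1) := rfl
          _ ≤ _ := Finset.single_le_sum (f := fun j => t (m+1) (j+1))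
              (fun j _ => ht _ _) (Finset.self_mem_range_succ n)
        rw [Finset.sum_range_succ (fun i => ∑ j ∈ range (n+1), t i (j+1))]
        linarith
      · have hB := ihn
        have expand : ∑ i ∈ range (m+2), ∑ j ∈ range (n+1), t i (j+1)
            = (∑ i ∈ range (m+2), ∑ j ∈ range n, t i (j+1))
              + ∑ i ∈ range (m+2), t i (n+1) := by
          rw [← Finset.sum_add_distrib]
          exact Finset.sum_congr rfl fun i _ => Finset.sum_range_succ _ n
        have hsingle : t (m+1) (n+1) ≤ ∑ i ∈ range (m+2), t i (n+1) :=
          Finset.single_le_sum (f := fun i => t i (n+1)) (fun i _ => ht _ _)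
            (Finset.self_mem_range_succ (m+1))
        rw [expand]
        linarith

lemma depart_succ_le (t : ℕ → ℕ → ℝ) (ht : ∀ i n, 0 ≤ t i n) (m : ℕ) :
    ∀ n, 1 ≤ n → ∃ k, 1 ≤ k ∧ k ≤ n ∧
      depart t (m + 1) n ≤ depart t m k + ∑ j ∈ Finset.Ico (k - 1) n, t (m + 1) (j + 1) := by
  intro n
  induction n with
  | zero => omega
  | succ n ihn =>
    intro _
    rcases Nat.eq_zero_or_pos n with h0 | hpos
    · subst h0
      refine ⟨1, le_rfl, le_rfl, ?_⟩
      rw [depart_succ, depart_zero]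
      simp only [Nat.sub_self]
      rw [max_eq_left (depart_nonneg t ht m 1)]
      simp
    · rcases ihn hpos with ⟨k, hk1, hkn, hk⟩
      rw [depart_succ, ← max_add_add_right]
      rcases le_total (depart t m (n+1)) (depart t (m+1) n) with hle | hle
      · refine ⟨k, hk1, by omega, ?_⟩
        have hIco : ∑ j ∈ Finset.Ico (k-1) (n+1), t (m+1) (j+1)
            = ∑ j ∈ Finset.Ico (k-1) n, t (m+1) (j+1) + t (m+1) (n+1) :=
          Finset.sum_Ico_succ_top (by omega) _
        rw [hIco]
        exact max_le (by linarith) (by linarith)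
      · refine ⟨n+1, by omega, le_rfl, ?_⟩
        have hsum : ∑ j ∈ Finset.Ico (n+1-1) (n+1), t (m+1) (j+1) = t (m+1) (n+1) := by
          simp
        rw [hsum]
        exact max_le (by linarith) (by linarith)

noncomputable def gmax (f : ℕ → ℝ) : ℕ → ℝ
  | 0 => f 0
  | m + 1 => max (gmax f m) (f (m + 1))

lemma gmax_nonneg (f : ℕ → ℝ) (m : ℕ) (h : ∀ i ≤ m, 0 ≤ f i) : 0 ≤ gmax f m := by
  induction m with
  | zero => exact h 0 le_rfl
  | succ m ih =>
    exact le_trans (ih fun i hi => h i (by omega)) (le_max_left _ _)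

lemma gmax_le_sum (f : ℕ → ℝ) (m : ℕ) (h : ∀ i ≤ m, 0 ≤ f i) :
    gmax f m ≤ ∑ i ∈ range (m + 1), f i := by
  induction m with
  | zero => simp [gmax]
  | succ m ih =>
    rw [Finset.sum_range_succ]
    refine max_le ?_ ?_
    · have := ih fun i hi => h i (by omega)
      have := h (m+1) le_rfl
      linarith
    · have : 0 ≤ ∑ i ∈ range (m+1), f i :=
        Finset.sum_nonneg fun i hi => h i (by simp at hi; omega)
      linarith

lemma exists_linear_bound (f : ℕ → ℝ) (a : ℝ)
    (hf : Filter.Tendsto (fun n : ℕ => f n / n) atTop (𝓝 a)) {ε : ℝ} (hε : 0 < ε) :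
    ∃ C, 0 ≤ C ∧ ∀ n : ℕ, |f n - n * a| ≤ ε * n + C := by
  rw [Metric.tendsto_atTop] at hf
  obtain ⟨N, hN⟩ := hf ε hε
  refine ⟨∑ j ∈ range (N + 1), |f j - j * a|, Finset.sum_nonneg fun j _ => abs_nonneg _, ?_⟩
  intro n
  rcases Nat.lt_or_ge n (N + 1) with h | h
  · have h2 : |f n - n * a| ≤ ∑ j ∈ range (N + 1), |f j - j * a| :=
      Finset.single_le_sum (f := fun j => |f j - j * a|) (fun j _ => abs_nonneg _)
        (Finset.mem_range.2 h)
    have : (0:ℝ) ≤ ε * n := by positivity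
    linarith
  · have hn : (0:ℝ) < n := by
      have : 1 ≤ n := by omega
      exact_mod_cast Nat.lt_of_lt_of_le Nat.zero_lt_one this
    have hd := hN n (by omega)
    rw [Real.dist_eq] at hd
    have hrw : f n / n - a = (f n - n * a) / n := by field_simp
    rw [hrw, abs_div, abs_of_pos hn] at hd
    have : |f n - n * a| < ε * n := (div_lt_iff₀ hn).mp hd
    have hC : (0:ℝ) ≤ ∑ j ∈ range (N + 1), |f j - j * a| :=
      Finset.sum_nonneg fun j _ => abs_nonneg _
    linarith

set_option maxHeartbeats 1000000 in
lemma tendsto_depart (t : ℕ → ℕ → ℝ) (ht : ∀ i n, 0 ≤ t i n) (μs : ℕ → ℝ) :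
    ∀ m, (∀ i ≤ m, Tendsto (fun n : ℕ => (∑ j ∈ range n, t i (j + 1)) / n) atTop (𝓝 (μs i))) →
      Tendsto (fun n : ℕ => depart t m n / n) atTop (𝓝 (gmax μs m)) := by
  intro m
  induction m with
  | zero =>
    intro h
    simpa [depart_zero_left, gmax] using h 0 le_rfl
  | succ m ihm =>
    intro h
    have hDm := ihm fun i hi => h i (by omega)
    have hT := h (m + 1) le_rfl
    set G : ℝ := gmax μs m with hG
    set μm : ℝ := μs (m + 1) with hμm
    have hGnn : 0 ≤ G := gmax_nonneg μs m fun i hi =>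
      ge_of_tendsto' (h i (by omega)) fun n =>
        div_nonneg (Finset.sum_nonneg fun j _ => ht _ _) (Nat.cast_nonneg n)
    have hμnn : 0 ≤ μm :=
      ge_of_tendsto' hT fun n =>
        div_nonneg (Finset.sum_nonneg fun j _ => ht _ _) (Nat.cast_nonneg n)
    have hGm1 : gmax μs (m + 1) = max G μm := rfl
    rw [hGm1]
    set Gm1 : ℝ := max G μm with hGm1'
    rw [Metric.tendsto_nhds]
    intro ε hε
    set ε' : ℝ := ε / 8 with hε'
    have hε'pos : 0 < ε' := by positivity
    obtain ⟨C, hC0, hC⟩ := exists_linear_bound _ _ hDm hε'pos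
    obtain ⟨C', hC'0, hC'⟩ := exists_linear_bound _ _ hT hε'pos
    have E1 : ∀ᶠ n : ℕ in atTop,
        Gm1 - ε / 2 < max (depart t m n / n) ((∑ j ∈ range n, t (m+1) (j+1)) / n) :=
      (hDm.max hT).eventually (eventually_gt_nhds (by linarith))
    have E2 : ∀ᶠ n : ℕ in atTop, 1 ≤ n := eventually_ge_atTop 1
    have E3 : ∀ᶠ n : ℕ in atTop, (μm + C + 2 * C') / n ≤ ε' :=
      (tendsto_const_div_atTop_nhds_zero_nat (μm + C + 2 * C')).eventually
        (eventually_le_nhds hε'pos)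
    filter_upwards [E1, E2, E3] with n h1 h2 h3
    have hn : (0:ℝ) < n := by exact_mod_cast h2
    -- lower bound
    have hlow : Gm1 - ε / 2 < depart t (m + 1) n / n := by
      refine lt_of_lt_of_le h1 (max_le ?_ ?_)
      · have := depart_mono_left t ht m n
        gcongr
      · have := sum_le_depart t ht (le_refl (m+1)) n
        gcongr
    -- upper bound
    obtain ⟨k, hk1, hkn, hkle⟩ := depart_succ_le t ht m n h2
    have hsub : ∑ j ∈ Finset.Ico (k - 1) n, t (m + 1) (j + 1)
        = (∑ j ∈ range n, t (m + 1) (j + 1)) - ∑ j ∈ range (k - 1), t (m + 1) (j + 1) := by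
      rw [Finset.sum_Ico_eq_sub _ (by omega)]
    have hkR : (1:ℝ) ≤ (k:ℝ) := by exact_mod_cast hk1
    have hknR : (k:ℝ) ≤ (n:ℝ) := by exact_mod_cast hkn
    have hcast : ((k - 1 : ℕ) : ℝ) = (k:ℝ) - 1 := by
      have : (1:ℕ) ≤ k := hk1
      push_cast [this]
      ring
    have hDmk := abs_le.mp (hC k)
    have hTn := abs_le.mp (hC' n)
    have hTk := abs_le.mp (hC' (k - 1))
    rw [hcast] at hTk
    have h4 : (k:ℝ) * G + ((n:ℝ) - k) * μm ≤ (n:ℝ) * Gm1 := by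
      have p1 : (k:ℝ) * G ≤ (k:ℝ) * Gm1 := by
        have : G ≤ Gm1 := le_max_left _ _
        nlinarith
      have p2 : ((n:ℝ) - k) * μm ≤ ((n:ℝ) - k) * Gm1 := by
        have : μm ≤ Gm1 := le_max_right _ _
        nlinarith
      nlinarith
    have he1 : ε' * (k:ℝ) ≤ ε' * n := by nlinarith
    have he2 : ε' * ((k:ℝ) - 1) ≤ ε' * n := by nlinarith
    have hupper : depart t (m + 1) n ≤ (n:ℝ) * Gm1 + 3 * ε' * n + (μm + C + 2 * C') := by
      rw [hsub] at hkle
      linarith [hkle, hDmk.2, hTn.2, hTk.1, h4, he1, he2]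
    have hdiv : depart t (m + 1) n / n ≤ Gm1 + 3 * ε' + (μm + C + 2 * C') / n := by
      have expand : ((n:ℝ) * Gm1 + 3 * ε' * n + (μm + C + 2 * C')) / n
          = Gm1 + 3 * ε' + (μm + C + 2 * C') / n := by
        field_simp
      rw [← expand]
      gcongr
    have hup2 : depart t (m + 1) n / n ≤ Gm1 + ε / 2 := by
      have : 3 * ε' + ε' = ε / 2 := by rw [hε']; ring
      linarith
    rw [Real.dist_eq, abs_lt]
    constructor <;> linarith


/-- **Existence of the mean cycle time.** If the interarrival and service times
`τ i n`, `i = 0, …, M`, `n = 1, 2, …`, form mutually independent sequences of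
i.i.d. nonnegative random variables with finite means, then there is a
constant `γ` such that `D_M(n)/n → γ` with probability one and
`E[D_M(n)]/n → γ`. -/
theorem exists_mean_cycle_time
    {Ω : Type*} [MeasurableSpace Ω] (μ : Measure Ω) [IsProbabilityMeasure μ]
    (M : ℕ) (τ : ℕ → ℕ → Ω → ℝ)
    (hpos : ∀ i ≤ M, ∀ n, 1 ≤ n → ∀ ω, 0 ≤ τ i n ω)
    (hmeas : ∀ i ≤ M, ∀ n, Measurable (τ i n))
    (hindep : iIndepFun
        (fun p : Fin (M + 1) × ℕ => τ (p.1 : ℕ) (p.2 + 1)) μ)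
    (hident : ∀ i ≤ M, ∀ n, 1 ≤ n → IdentDistrib (τ i n) (τ i 1) μ μ)
    (hint : ∀ i ≤ M, Integrable (τ i 1) μ) :
    ∃ γ : ℝ,
      (∀ᵐ ω ∂μ, Tendsto (fun n : ℕ => depart (fun i j => τ i j ω) M n / n)
          atTop (nhds γ))
        ∧ Tendsto (fun n : ℕ => (∫ ω, depart (fun i j => τ i j ω) M n ∂μ) / n)
            atTop (nhds γ) := by
  classical
  set μs : ℕ → ℝ := fun i => ∫ ω, τ i 1 ω ∂μ with hμs
  set γ : ℝ := gmax μs M with hγ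
  have hμsnn : ∀ i ≤ M, 0 ≤ μs i := fun i hi =>
    integral_nonneg fun ω => hpos i hi 1 le_rfl ω
  have hγnn : 0 ≤ γ := gmax_nonneg μs M hμsnn
  -- Strong law of large numbers for each row
  have hSLLN : ∀ i : ℕ, ∀ᵐ ω ∂μ, i ≤ M →
      Tendsto (fun n : ℕ => (∑ j ∈ range n, τ i (j + 1) ω) / n) atTop (𝓝 (μs i)) := by
    intro i
    by_cases hi : i ≤ M
    · have hi' : i < M + 1 := by omega
      have hindep' : Pairwise (Function.onFun (IndepFun · · μ) fun j : ℕ => τ i (j + 1)) := by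
        intro j k hjk
        have h := hindep.indepFun
          (i := ((⟨i, hi'⟩ : Fin (M + 1)), j)) (j := ((⟨i, hi'⟩ : Fin (M + 1)), k))
          (by simp [hjk])
        exact h
      have := strong_law_ae_real (fun j : ℕ => τ i (j + 1)) (hint i hi) hindep'
        (fun j => hident i hi (j + 1) (by omega))
      filter_upwards [this] with ω hω _
      exact hω
    · filter_upwards with ω h
      exact absurd h hi
  have hae : ∀ᵐ ω ∂μ, ∀ i, i ≤ M →
      Tendsto (fun n : ℕ => (∑ j ∈ range n, τ i (j + 1) ω) / n) atTop (𝓝 (μs i)) :=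
    ae_all_iff.2 hSLLN
  -- truncated nonnegative version of τ
  set t' : Ω → ℕ → ℕ → ℝ := fun ω i j => if i ≤ M ∧ 1 ≤ j then τ i j ω else 0 with ht'def
  have ht' : ∀ ω, ∀ i n, 0 ≤ t' ω i n := by
    intro ω i n
    simp only [ht'def]
    split
    · next h => exact hpos i h.1 n h.2 ω
    · exact le_rfl
  have hteq : ∀ ω m, m ≤ M → ∀ n,
      depart (fun i j => τ i j ω) m n = depart (t' ω) m n := by
    intro ω m hm n
    refine depart_congr _ _ m n fun i hi j h1 _ => ?_
    simp only [ht'def]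
    rw [if_pos ⟨by omega, h1⟩]
  have hsum' : ∀ ω, ∀ i ≤ M, ∀ n : ℕ,
      ∑ j ∈ range n, t' ω i (j + 1) = ∑ j ∈ range n, τ i (j + 1) ω := by
    intro ω i hi n
    refine Finset.sum_congr rfl fun j _ => ?_
    simp only [ht'def]
    rw [if_pos ⟨hi, by omega⟩]
  -- almost sure convergence
  have haeT : ∀ᵐ ω ∂μ, Tendsto (fun n : ℕ => depart (fun i j => τ i j ω) M n / n)
      atTop (𝓝 γ) := by
    filter_upwards [hae] with ω hω
    have h1 : Tendsto (fun n : ℕ => depart (t' ω) M n / n) atTop (𝓝 γ) := by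
      refine tendsto_depart (t' ω) (ht' ω) μs M fun i hi => ?_
      have : (fun n : ℕ => (∑ j ∈ range n, t' ω i (j + 1)) / n)
          = fun n : ℕ => (∑ j ∈ range n, τ i (j + 1) ω) / n :=
        funext fun n => by rw [hsum' ω i hi n]
      rw [this]
      exact hω i hi
    have : (fun n : ℕ => depart (fun i j => τ i j ω) M n / n)
        = fun n : ℕ => depart (t' ω) M n / n :=
      funext fun n => by rw [hteq ω M le_rfl n]
    rw [this]
    exact h1
  refine ⟨γ, haeT, ?_⟩
  -- measurability of the departure times
  have hDmeas : ∀ m, m ≤ M → ∀ n, Measurable (fun ω => depart (fun i j => τ i j ω) m n) := by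
    intro m
    induction m with
    | zero =>
      intro hm n
      induction n with
      | zero => simpa [depart_zero] using measurable_const
      | succ n ihn =>
        have : (fun ω => depart (fun i j => τ i j ω) 0 (n + 1))
            = fun ω => depart (fun i j => τ i j ω) 0 n + τ 0 (n + 1) ω :=
          funext fun ω => by simp [depart]
        rw [this]
        exact ihn.add (hmeas 0 hm (n + 1))
    | succ m ihm =>
      intro hm n
      induction n with
      | zero => simpa [depart_zero] using measurable_const
      | succ n ihn =>
        have : (fun ω => depart (fun i j => τ i j ω) (m + 1) (n + 1))
            = fun ω => max (depart (fun i j => τ i j ω) m (n + 1))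
                (depart (fun i j => τ i j ω) (m + 1) n) + τ (m + 1) (n + 1) ω :=
          funext fun ω => by rw [depart_succ]
        rw [this]
        exact ((ihm (by omega) (n + 1)).max ihn).add (hmeas (m + 1) hm (n + 1))
  -- the integrals
  set f : ℕ → Ω → ℝ := fun n ω => depart (fun i j => τ i j ω) M n / n with hfdef
  have hfnn : ∀ n ω, 0 ≤ f n ω := by
    intro n ω
    have h0 : 0 ≤ depart (fun i j => τ i j ω) M n := by
      rw [hteq ω M le_rfl n]; exact depart_nonneg _ (ht' ω) M n
    positivity
  have hfmeas : ∀ n : ℕ, Measurable (f n) := fun n => (hDmeas M le_rfl n).div_const _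
  set J : ℕ → ℝ≥0∞ := fun n => ∫⁻ ω, ENNReal.ofReal (f n ω) ∂μ with hJdef
  have heq : ∀ n : ℕ, (∫ ω, depart (fun i j => τ i j ω) M n ∂μ) / n = (J n).toReal := by
    intro n
    rw [← integral_div]
    exact integral_eq_lintegral_of_nonneg_ae (Filter.Eventually.of_forall (hfnn n))
      (hfmeas n).aestronglyMeasurable
  set g : ℕ → Ω → ℝ := fun n ω => (∑ i ∈ range (M + 1), ∑ j ∈ range n, τ i (j + 1) ω) / n
    with hgdef
  set s : ℝ := ∑ i ∈ range (M + 1), μs i with hsdef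
  have hγs : True := trivial
  have hτint : ∀ i, i ∈ range (M + 1) → ∀ j : ℕ, Integrable (fun ω => τ i (j + 1) ω) μ := by
    intro i hi j
    have hi' : i ≤ M := by simp at hi; omega
    exact ((hident i hi' (j + 1) (by omega)).integrable_iff).2 (hint i hi')
  have hgmeas : ∀ n : ℕ, Measurable (g n) := by
    intro n
    apply Measurable.div_const
    apply Finset.measurable_sum
    intro i hi
    apply Finset.measurable_sum
    intro j _
    exact hmeas i (by simp at hi; omega) (j + 1)
  have hgnn : ∀ n ω, 0 ≤ g n ω := by
    intro n ω
    have : 0 ≤ ∑ i ∈ range (M + 1), ∑ j ∈ range n, τ i (j + 1) ω :=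
      Finset.sum_nonneg fun i hi => Finset.sum_nonneg fun j _ =>
        hpos i (by simp at hi; omega) (j + 1) (by omega) ω
    positivity
  have hgint : ∀ n : ℕ, Integrable (g n) μ := by
    intro n
    apply Integrable.div_const
    exact integrable_finset_sum _ fun i hi =>
      integrable_finset_sum _ fun j _ => hτint i hi j
  have hfg : ∀ n ω, f n ω ≤ g n ω := by
    intro n ω
    have h1 : depart (fun i j => τ i j ω) M n
        ≤ ∑ i ∈ range (M + 1), ∑ j ∈ range n, τ i (j + 1) ω := by
      rw [hteq ω M le_rfl n]
      refine (depart_le_sum (t' ω) (ht' ω) M n).trans_eq ?_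
      exact Finset.sum_congr rfl fun i hi => hsum' ω i (by simp at hi; omega) n
    have hn0 : (0:ℝ) ≤ n := Nat.cast_nonneg n
    exact div_le_div_of_nonneg_right h1 hn0
  have hgval : ∀ n : ℕ, 1 ≤ n → ∫ ω, g n ω ∂μ = s := by
    intro n hn
    have hn0 : (n:ℝ) ≠ 0 := by positivity
    simp only [hgdef]
    rw [integral_div, integral_finset_sum _ fun i hi =>
      integrable_finset_sum _ fun j _ => hτint i hi j]
    have : ∀ i ∈ range (M + 1), ∫ ω, ∑ j ∈ range n, τ i (j + 1) ω ∂μ = n * μs i := by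
      intro i hi
      rw [integral_finset_sum _ fun j _ => hτint i hi j]
      have : ∀ j ∈ range n, ∫ ω, τ i (j + 1) ω ∂μ = μs i := by
        intro j _
        exact (hident i (by simp at hi; omega) (j + 1) (by omega)).integral_eq
      rw [Finset.sum_congr rfl this]
      simp [mul_comm]
    rw [Finset.sum_congr rfl this, ← Finset.mul_sum]
    field_simp
    exact hsdef.symm
  -- a.e. convergence of the dominating sequence g
  have haeG : ∀ᵐ ω ∂μ, Tendsto (fun n : ℕ => g n ω) atTop (𝓝 s) := by
    filter_upwards [hae] with ω hω
    have h2 : (fun n : ℕ => g n ω)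
        = fun n : ℕ => ∑ i ∈ range (M + 1), (∑ j ∈ range n, τ i (j + 1) ω) / n := by
      funext n
      simp only [hgdef]
      rw [Finset.sum_div]
    rw [h2, hsdef]
    exact tendsto_finset_sum _ fun i hi => hω i (by simp at hi; omega)
  set c : ℝ≥0∞ := ENNReal.ofReal s with hcdef
  have hsnn : 0 ≤ s := Finset.sum_nonneg fun i hi => hμsnn i (by simp at hi; omega)
  have hgc : ∀ n : ℕ, 1 ≤ n → ∫⁻ ω, ENNReal.ofReal (g n ω) ∂μ = c := by
    intro n hn
    rw [hcdef, ← ofReal_integral_eq_lintegral_ofReal (hgint n)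
      (Filter.Eventually.of_forall (hgnn n)), hgval n hn]
  have hJle : ∀ n : ℕ, 1 ≤ n → J n ≤ c := by
    intro n hn
    rw [← hgc n hn]
    simp only [hJdef]
    exact lintegral_mono fun ω => ENNReal.ofReal_le_ofReal (hfg n ω)
  have hmeasF : ∀ n : ℕ, Measurable fun ω => ENNReal.ofReal (f n ω) :=
    fun n => (hfmeas n).ennreal_ofReal
  have hlim : ENNReal.ofReal γ ≤ liminf J atTop := by
    have hcong : ∀ᵐ ω ∂μ, liminf (fun n => ENNReal.ofReal (f n ω)) atTop
        = ENNReal.ofReal γ := by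
      filter_upwards [haeT] with ω hω
      exact (ENNReal.tendsto_ofReal hω).liminf_eq
    calc ENNReal.ofReal γ
        = ∫⁻ ω, liminf (fun n => ENNReal.ofReal (f n ω)) atTop ∂μ := by
          rw [lintegral_congr_ae hcong, lintegral_const, measure_univ, mul_one]
      _ ≤ liminf J atTop := lintegral_liminf_le hmeasF
  set K : ℕ → ℝ≥0∞ := fun n => ∫⁻ ω, ENNReal.ofReal (g n ω - f n ω) ∂μ with hKdef
  have hmeasK : ∀ n : ℕ, Measurable fun ω => ENNReal.ofReal (g n ω - f n ω) :=
    fun n => ((hgmeas n).sub (hfmeas n)).ennreal_ofReal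
  have hsplit : ∀ n : ℕ, 1 ≤ n → J n + K n = c := by
    intro n hn
    rw [← hgc n hn]
    simp only [hJdef, hKdef]
    rw [← lintegral_add_left (hfmeas n).ennreal_ofReal]
    refine lintegral_congr fun ω => ?_
    rw [← ENNReal.ofReal_add (hfnn n ω) (by linarith [hfg n ω])]
    congr 1
    ring
  have hKlow : ENNReal.ofReal (s - γ) ≤ liminf K atTop := by
    have hcong : ∀ᵐ ω ∂μ, liminf (fun n => ENNReal.ofReal (g n ω - f n ω)) atTop
        = ENNReal.ofReal (s - γ) := by
      filter_upwards [haeT, haeG] with ω h1 h2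
      exact (ENNReal.tendsto_ofReal (h2.sub h1)).liminf_eq
    calc ENNReal.ofReal (s - γ)
        = ∫⁻ ω, liminf (fun n => ENNReal.ofReal (g n ω - f n ω)) atTop ∂μ := by
          rw [lintegral_congr_ae hcong, lintegral_const, measure_univ, mul_one]
      _ ≤ liminf K atTop := lintegral_liminf_le hmeasK
  have hlimsupc : limsup J atTop ≤ c := limsup_le_of_le (by isBoundedDefault)
    ((eventually_ge_atTop 1).mono fun n hn => hJle n hn)
  have hlimsup : limsup J atTop ≤ ENNReal.ofReal γ := by
    refine ENNReal.le_of_forall_pos_le_add fun δ hδ _ => ?_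
    have hδR : (0:ℝ) < (δ:ℝ) := hδ
    have hcoe : (δ : ℝ≥0∞) = ENNReal.ofReal (δ:ℝ) := ENNReal.ofReal_coe_nnreal.symm
    rcases le_or_gt (s - γ) (δ:ℝ) with hcase | hcase
    · refine hlimsupc.trans ?_
      rw [hcdef, hcoe, ← ENNReal.ofReal_add hγnn hδR.le]
      exact ENNReal.ofReal_le_ofReal (by linarith)
    · set b : ℝ≥0∞ := ENNReal.ofReal (s - γ - δ) with hbdef
      have hbK : b < liminf K atTop :=
        lt_of_lt_of_le ((ENNReal.ofReal_lt_ofReal_iff (by linarith)).2 (by linarith)) hKlow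
      have hev : ∀ᶠ n in atTop, b < K n := eventually_lt_of_lt_liminf hbK
      have hev2 : ∀ᶠ n : ℕ in atTop, J n ≤ c - b := by
        filter_upwards [hev, eventually_ge_atTop 1] with n h1 h2
        refine ENNReal.le_sub_of_add_le_right
          (by rw [hbdef]; exact ENNReal.ofReal_ne_top) ?_
        calc J n + b ≤ J n + K n := add_le_add_right h1.le _
          _ = c := hsplit n h2
      have h3 : limsup J atTop ≤ c - b := limsup_le_of_le (by isBoundedDefault) hev2
      refine h3.trans ?_
      have hcb : c - b = ENNReal.ofReal (γ + (δ:ℝ)) := by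
        rw [hcdef, hbdef, ← ENNReal.ofReal_sub s (by linarith)]
        congr 1
        ring
      rw [hcb, ENNReal.ofReal_add hγnn hδR.le, hcoe]
  have hJtend : Tendsto J atTop (𝓝 (ENNReal.ofReal γ)) :=
    tendsto_of_le_liminf_of_limsup_le hlim hlimsup
  have htoReal : Tendsto (fun n => (J n).toReal) atTop (𝓝 γ) := by
    have h := (ENNReal.tendsto_toReal ENNReal.ofReal_ne_top).comp hJtend
    rwa [ENNReal.toReal_ofReal hγnn] at h
  have hfin : (fun n : ℕ => (∫ ω, depart (fun i j => τ i j ω) M n ∂μ) / n)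
      = fun n => (J n).toReal := funext heq
  rw [hfin]
  exact htoReal
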